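/- arXiv:0909.4111 — 3 statements merged into one kernel-verified Lean document; each statement's English description precedes it below -/
import Mathlib

section
/- Let A ⊆ ℝ² be a nonempty bounded open set. Then i(A) − |A|²/(2π) − |M(A)|²/|A| = 0 if and only if A coincides, up to a set of Lebesgue measure zero, with an open ball B_r(x₀) = {x ∈ ℝ² : |x − x₀| < r} for some x₀ ∈ ℝ² and r > 0. -/
open MeasureTheory Metric

/-- The plane `ℝ²`. -/
abbrev Plane := EuclideanSpace ℝ (Fin 2)

/-- The mass `|A|` of a set: its two-dimensional Lebesgue measure. -/
noncomputable def mass (A : Set Plane) : ℝ := (volume A).toReal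

/-- The momentum `M(A) = ∫_A x dx`. -/
noncomputable def mom (A : Set Plane) : Plane := ∫ x in A, x

/-- The angular momentum `i(A) = ∫_A |x|² dx`. -/
noncomputable def angMom (A : Set Plane) : ℝ := ∫ x in A, ‖x‖ ^ 2

/-- `Q(A; B_r(x₀)) = ∫_{A △ B_r(x₀)} | |x − x₀|² − r² | dx`. -/
noncomputable def Qfun (A : Set Plane) (x₀ : Plane) (r : ℝ) : ℝ :=
  ∫ x in symmDiff A (ball x₀ r), |‖x - x₀‖ ^ 2 - r ^ 2|

section Aux

open Set RealInnerProductSpace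

lemma intOnB {E : Type*} [NormedAddCommGroup E] [NormedSpace ℝ E] {f : Plane → E}
    (hf : Continuous f) {s : Set Plane} (hs : Bornology.IsBounded s) :
    IntegrableOn f s volume := by
  obtain ⟨R, hR⟩ := hs.subset_closedBall 0
  exact ((hf.continuousOn).integrableOn_compact (isCompact_closedBall 0 R)).mono_set hR

lemma vol_finB {s : Set Plane} (hs : Bornology.IsBounded s) : volume s < ⊤ := by
  obtain ⟨R, hR⟩ := hs.subset_closedBall 0
  exact lt_of_le_of_lt (measure_mono hR) measure_closedBall_lt_top

lemma vol_ball (x : Plane) (r : ℝ) (hr : 0 ≤ r) :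
    volume (ball x r) = ENNReal.ofReal (Real.pi * r ^ 2) := by
  rw [EuclideanSpace.volume_ball, Fintype.card_fin,
    show ((2:ℕ)/2 + 1 : ℝ) = 2 by norm_num, Real.Gamma_two,
    Real.sq_sqrt Real.pi_pos.le, ← ENNReal.ofReal_pow hr,
    ← ENNReal.ofReal_mul (by positivity)]
  ring_nf

lemma mass_ball (x : Plane) (r : ℝ) (hr : 0 ≤ r) :
    mass (ball x r) = Real.pi * r ^ 2 := by
  rw [mass, vol_ball x r hr, ENNReal.toReal_ofReal (by positivity)]

set_option linter.unnecessarySeqFocus false in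
lemma sq_int (r : ℝ) (hr : 0 ≤ r) :
    ∫ x in ball (0 : Plane) r, ‖x‖ ^ 2 = Real.pi * r ^ 4 / 2 := by
  have h1 : ∀ x : Plane, (Set.Iio r).indicator (fun y => y ^ 2) ‖x‖ =
      (ball (0:Plane) r).indicator (fun x => ‖x‖^2) x := by
    intro x
    by_cases h : x ∈ ball (0:Plane) r
    · rw [indicator_of_mem h, indicator_of_mem]
      simpa [mem_ball, dist_eq_norm] using h
    · rw [indicator_of_notMem h, indicator_of_notMem]
      simpa [mem_ball, dist_eq_norm] using h
  have key := integral_fun_norm_addHaar (volume : Measure Plane)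
    ((Set.Iio r).indicator (fun y => y ^ 2))
  simp only [h1] at key
  rw [integral_indicator measurableSet_ball] at key
  have hd : Module.finrank ℝ Plane = 2 := by simp [finrank_euclideanSpace]
  rw [key, hd, measureReal_def, vol_ball _ _ zero_le_one]
  have e : ∀ y:ℝ, y ^ (2-1) • (Set.Iio r).indicator (fun y => y ^ 2) y
      = (Set.Iio r).indicator (fun y => y ^ 3) y := by
    intro y
    by_cases h : y ∈ Iio r <;>
      simp [indicator_of_mem, indicator_of_notMem, h, pow_succ] <;> ring
  simp only [e]
  rw [setIntegral_indicator measurableSet_Iio, Ioi_inter_Iio,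
    ← integral_Ioc_eq_integral_Ioo, ← intervalIntegral.integral_of_le hr,
    integral_pow]
  rw [one_pow, mul_one, ENNReal.toReal_ofReal Real.pi_pos.le]
  simp only [smul_eq_mul, nsmul_eq_mul]
  push_cast
  ring

lemma int_transl {E : Type*} [NormedAddCommGroup E] [NormedSpace ℝ E]
    (f : Plane → E) (x₀ : Plane) (s : Set Plane) :
    ∫ x in s, f x = ∫ x in ((· + x₀) ⁻¹' s), f (x + x₀) :=
  ((measurePreserving_add_right volume x₀).setIntegral_preimage_emb
    (measurableEmbedding_addRight x₀) f s).symm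

lemma ball_pre (x₀ : Plane) (r : ℝ) : ((· + x₀) ⁻¹' ball x₀ r) = ball (0:Plane) r := by
  ext x; simp [mem_ball, dist_eq_norm]

lemma mom_ball_zero (r : ℝ) : ∫ x in ball (0:Plane) r, x = 0 := by
  have hmp : MeasurePreserving (fun x : Plane => -x)
      ((volume : Measure Plane).restrict (ball 0 r))
      ((volume : Measure Plane).restrict (ball 0 r)) := by
    have h := (Measure.measurePreserving_neg (volume : Measure Plane))
    have := h.restrict_preimage (s := ball (0:Plane) r) measurableSet_ball
    simpa using this
  have h2 : ∫ x in ball (0:Plane) r, x = ∫ x in ball (0:Plane) r, -x :=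
    (hmp.integral_comp (Homeomorph.neg Plane).measurableEmbedding id).symm
  rw [integral_neg] at h2
  have h3 : (2 : ℝ) • (∫ x in ball (0:Plane) r, x) = 0 := by
    rw [two_smul]; nth_rewrite 1 [h2]; simp
  simpa using (smul_eq_zero.mp h3).resolve_left (by norm_num)

lemma ball_f_int (x₀ : Plane) (r : ℝ) (hr : 0 ≤ r) :
    ∫ x in ball x₀ r, (‖x - x₀‖ ^ 2 - r ^ 2) = -(Real.pi * r ^ 4 / 2) := by
  rw [int_transl (fun x => ‖x - x₀‖ ^ 2 - r ^ 2) x₀ (ball x₀ r), ball_pre]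
  simp only [add_sub_cancel_right]
  rw [integral_sub (intOnB (by fun_prop) isBounded_ball) (intOnB (by fun_prop) isBounded_ball),
    sq_int r hr, integral_const]
  rw [measureReal_def, Measure.restrict_apply_univ]
  have : (volume (ball (0:Plane) r)).toReal = Real.pi * r ^ 2 := mass_ball 0 r hr
  rw [this]
  simp only [smul_eq_mul]
  ring

lemma Qsplit (A : Set Plane) (hAm : MeasurableSet A) (hAb : Bornology.IsBounded A)
    (x₀ : Plane) (r : ℝ) (hr : 0 ≤ r) :
    Qfun A x₀ r = (∫ x in A, (‖x - x₀‖ ^ 2 - r ^ 2))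
      - ∫ x in ball x₀ r, (‖x - x₀‖ ^ 2 - r ^ 2) := by
  have hBm : MeasurableSet (ball x₀ r) := measurableSet_ball
  have hBb : Bornology.IsBounded (ball x₀ r) := isBounded_ball
  have hsd : symmDiff A (ball x₀ r) = (A \ ball x₀ r) ∪ (ball x₀ r \ A) := by
    rw [Set.symmDiff_def]
  have hint : ∀ s : Set Plane, Bornology.IsBounded s →
      IntegrableOn (fun x => |‖x - x₀‖ ^ 2 - r ^ 2|) s volume :=
    fun s hs => intOnB (by fun_prop) hs
  have hintf : ∀ s : Set Plane, Bornology.IsBounded s →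
      IntegrableOn (fun x => ‖x - x₀‖ ^ 2 - r ^ 2) s volume :=
    fun s hs => intOnB (by fun_prop) hs
  have hdisj : Disjoint (A \ ball x₀ r) (ball x₀ r \ A) := disjoint_sdiff_sdiff
  rw [Qfun, hsd,
    setIntegral_union hdisj (hBm.diff hAm) (hint _ (hAb.subset diff_subset))
      (hint _ (hBb.subset diff_subset))]
  have h2 : ∫ x in A \ ball x₀ r, |‖x - x₀‖ ^ 2 - r ^ 2|
      = ∫ x in A \ ball x₀ r, (‖x - x₀‖ ^ 2 - r ^ 2) := by
    refine setIntegral_congr_fun (hAm.diff hBm) fun x hx => ?_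
    have h : r ≤ ‖x - x₀‖ := by
      have := hx.2; rw [mem_ball, dist_eq_norm] at this; linarith [not_lt.mp this]
    rw [abs_of_nonneg]; nlinarith [norm_nonneg (x - x₀)]
  have h3 : ∫ x in ball x₀ r \ A, |‖x - x₀‖ ^ 2 - r ^ 2|
      = ∫ x in ball x₀ r \ A, -(‖x - x₀‖ ^ 2 - r ^ 2) := by
    refine setIntegral_congr_fun (hBm.diff hAm) fun x hx => ?_
    have h : ‖x - x₀‖ < r := by
      have := hx.1; rwa [mem_ball, dist_eq_norm] at this
    rw [abs_of_nonpos]; nlinarith [norm_nonneg (x - x₀)]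
  have hAd : A \ ball x₀ r = A \ (A ∩ ball x₀ r) := by rw [diff_self_inter]
  have hBd : ball x₀ r \ A = ball x₀ r \ (A ∩ ball x₀ r) := by
    rw [inter_comm, diff_self_inter]
  have h4 : ∫ x in A \ ball x₀ r, (‖x - x₀‖ ^ 2 - r ^ 2)
      = (∫ x in A, (‖x - x₀‖ ^ 2 - r ^ 2)) - ∫ x in A ∩ ball x₀ r, (‖x - x₀‖ ^ 2 - r ^ 2) := by
    rw [hAd, integral_diff (hAm.inter hBm) (hintf _ hAb) inter_subset_left]
  have h5 : ∫ x in ball x₀ r \ A, (‖x - x₀‖ ^ 2 - r ^ 2)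
      = (∫ x in ball x₀ r, (‖x - x₀‖ ^ 2 - r ^ 2))
        - ∫ x in A ∩ ball x₀ r, (‖x - x₀‖ ^ 2 - r ^ 2) := by
    rw [hBd, integral_diff (hAm.inter hBm) (hintf _ hBb) inter_subset_right]
  rw [h2, h3, integral_neg, h4, h5]
  ring

lemma A_f_int (A : Set Plane) (hAb : Bornology.IsBounded A) (x₀ : Plane) (r : ℝ) :
    ∫ x in A, (‖x - x₀‖ ^ 2 - r ^ 2)
      = angMom A - 2 * ⟪x₀, mom A⟫ + (‖x₀‖ ^ 2 - r ^ 2) * mass A := by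
  have e : ∀ x : Plane, ‖x - x₀‖ ^ 2 - r ^ 2
      = (‖x‖ ^ 2 - 2 * ⟪x₀, x⟫) + (‖x₀‖ ^ 2 - r ^ 2) := by
    intro x
    rw [norm_sub_sq_real, real_inner_comm]
    ring
  simp only [e]
  have hin : Continuous (fun x : Plane => 2 * ⟪x₀, x⟫) :=
    continuous_const.mul (continuous_const.inner continuous_id)
  have hconst : IntegrableOn (fun _ : Plane => ‖x₀‖ ^ 2 - r ^ 2) A volume :=
    integrableOn_const (vol_finB hAb).ne
  have hsq : Continuous (fun x : Plane => ‖x‖ ^ 2) := by fun_prop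
  have hsubInt : IntegrableOn (fun x : Plane => ‖x‖ ^ 2 - 2 * ⟪x₀, x⟫) A volume :=
    intOnB (hsq.sub hin) hAb
  rw [integral_add hsubInt hconst, integral_sub (intOnB hsq hAb) (intOnB hin hAb)]
  have h1 : ∫ x in A, 2 * ⟪x₀, x⟫ = 2 * ⟪x₀, mom A⟫ := by
    rw [integral_const_mul,
      integral_inner (intOnB (f := fun x : Plane => x) continuous_id hAb) x₀]
    rfl
  rw [h1, integral_const, measureReal_def, Measure.restrict_apply_univ]
  simp only [smul_eq_mul, angMom, mass]
  ring

/-- The key identity: the deficit equals `Qfun` at the barycenter with the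
mass-matching radius. -/
lemma key_identity (A : Set Plane) (hAm : MeasurableSet A) (hAb : Bornology.IsBounded A)
    (hm : 0 < mass A) :
    Qfun A ((mass A)⁻¹ • mom A) (Real.sqrt (mass A / Real.pi)) =
      angMom A - (mass A) ^ 2 / (2 * Real.pi) - ‖mom A‖ ^ 2 / mass A := by
  set m := mass A with hm'
  set b : Plane := m⁻¹ • mom A with hb
  set r := Real.sqrt (m / Real.pi) with hrdef
  have hπ := Real.pi_pos
  have hr : 0 ≤ r := Real.sqrt_nonneg _
  have hr2 : r ^ 2 = m / Real.pi := Real.sq_sqrt (by positivity)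
  rw [Qsplit A hAm hAb b r hr, ball_f_int b r hr, A_f_int A hAb b r]
  have hbi : ⟪b, mom A⟫ = m⁻¹ * ‖mom A‖ ^ 2 := by
    rw [hb, real_inner_smul_left, real_inner_self_eq_norm_sq]
  have hbn : ‖b‖ ^ 2 = m⁻¹ ^ 2 * ‖mom A‖ ^ 2 := by
    rw [hb, norm_smul, mul_pow, norm_inv, Real.norm_eq_abs, abs_of_pos hm, inv_pow]
  have hr4 : r ^ 4 = (m / Real.pi) ^ 2 := by
    rw [show (4:ℕ) = 2 * 2 by norm_num, pow_mul, hr2]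
  rw [hbi, hbn, hr2, hr4]
  field_simp
  ring

/-- Mass, momentum and angular momentum of a ball. -/
lemma mom_ball (x₀ : Plane) (r : ℝ) (hr : 0 ≤ r) :
    mom (ball x₀ r) = (Real.pi * r ^ 2) • x₀ := by
  rw [mom, int_transl (fun x : Plane => x) x₀ (ball x₀ r), ball_pre]
  rw [integral_add (intOnB (f := fun x : Plane => x) continuous_id isBounded_ball)
    (integrableOn_const (vol_finB isBounded_ball).ne)]
  rw [mom_ball_zero, integral_const, measureReal_def, Measure.restrict_apply_univ]
  have : (volume (ball (0:Plane) r)).toReal = Real.pi * r ^ 2 := mass_ball 0 r hr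
  rw [this, zero_add]

lemma angMom_ball (x₀ : Plane) (r : ℝ) (hr : 0 ≤ r) :
    angMom (ball x₀ r) = Real.pi * r ^ 4 / 2 + (Real.pi * r ^ 2) * ‖x₀‖ ^ 2 := by
  rw [angMom, int_transl (fun x : Plane => ‖x‖ ^ 2) x₀ (ball x₀ r), ball_pre]
  have e : ∀ x : Plane, ‖x + x₀‖ ^ 2 = (‖x‖ ^ 2 + 2 * ⟪x₀, x⟫) + ‖x₀‖ ^ 2 := by
    intro x
    rw [norm_add_sq_real, real_inner_comm]
    try ring
  simp only [e]
  have hin : Continuous (fun x : Plane => 2 * ⟪x₀, x⟫) :=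
    continuous_const.mul (continuous_const.inner continuous_id)
  have hsq : Continuous (fun x : Plane => ‖x‖ ^ 2) := by fun_prop
  rw [integral_add (intOnB (f := fun x : Plane => ‖x‖ ^ 2 + 2 * ⟪x₀, x⟫) (hsq.add hin) isBounded_ball)
    (integrableOn_const (s := ball (0:Plane) r) (C := ‖x₀‖ ^ 2) (vol_finB isBounded_ball).ne),
    integral_add (intOnB hsq isBounded_ball) (intOnB hin isBounded_ball)]
  have h1 : ∫ x in ball (0:Plane) r, 2 * ⟪x₀, x⟫ = 0 := by
    rw [integral_const_mul,
      integral_inner (intOnB (f := fun x : Plane => x) continuous_id isBounded_ball) x₀]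
    rw [show (∫ x in ball (0:Plane) r, x) = 0 from mom_ball_zero r]
    simp
  rw [h1, sq_int r hr, integral_const, measureReal_def, Measure.restrict_apply_univ]
  have : (volume (ball (0:Plane) r)).toReal = Real.pi * r ^ 2 := mass_ball 0 r hr
  rw [this]
  simp only [smul_eq_mul]
  ring

end Aux

/-- For a nonempty bounded open set `A ⊆ ℝ²`, equality
`i(A) − |A|²/(2π) − |M(A)|²/|A| = 0` holds iff `A` coincides, up to a set of
Lebesgue measure zero, with an open ball `B_r(x₀)` for some `x₀` and `r > 0`. -/
theorem stmt1 (A : Set Plane) (hA : IsOpen A) (hAb : Bornology.IsBounded A)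
    (hAne : A.Nonempty) :
    angMom A - (mass A) ^ 2 / (2 * Real.pi) - ‖mom A‖ ^ 2 / mass A = 0 ↔
      ∃ (x₀ : Plane) (r : ℝ), 0 < r ∧ A =ᵐ[volume] ball x₀ r := by
  have hπ := Real.pi_pos
  have hAm : MeasurableSet A := hA.measurableSet
  have hm : 0 < mass A := by
    rw [mass]
    exact ENNReal.toReal_pos (hA.measure_ne_zero volume hAne) (vol_finB hAb).ne
  constructor
  · intro h
    set x₀ : Plane := (mass A)⁻¹ • mom A with hx₀
    set r := Real.sqrt (mass A / Real.pi) with hrdef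
    have hrpos : 0 < r := Real.sqrt_pos.2 (by positivity)
    refine ⟨x₀, r, hrpos, ?_⟩
    have hQ : Qfun A x₀ r = 0 := by rw [key_identity A hAm hAb hm, h]
    set S := symmDiff A (ball x₀ r) with hS
    have hSm : MeasurableSet S := hAm.symmDiff measurableSet_ball
    have hSb : Bornology.IsBounded S :=
      (hAb.union isBounded_ball).subset Set.symmDiff_subset_union
    have hg : IntegrableOn (fun x => |‖x - x₀‖ ^ 2 - r ^ 2|) S volume :=
      intOnB (by fun_prop) hSb
    have hzero : (fun x => |‖x - x₀‖ ^ 2 - r ^ 2|) =ᵐ[volume.restrict S] 0 := by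
      rw [← integral_eq_zero_iff_of_nonneg (fun x => abs_nonneg _) hg]
      exact hQ
    have hae : ∀ᵐ x ∂(volume : Measure Plane), x ∈ S → |‖x - x₀‖ ^ 2 - r ^ 2| = 0 := by
      rw [← ae_restrict_iff' hSm]
      exact hzero
    have hsub : S \ sphere x₀ r ⊆ {x | ¬(x ∈ S → |‖x - x₀‖ ^ 2 - r ^ 2| = 0)} := by
      intro x hx
      simp only [Set.mem_setOf_eq, Classical.not_imp]
      refine ⟨hx.1, ?_⟩
      have hne : ‖x - x₀‖ ≠ r := by
        intro hc
        exact hx.2 (by rwa [mem_sphere_iff_norm])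
      intro hc
      rw [abs_eq_zero, sub_eq_zero] at hc
      exact hne (by nlinarith [norm_nonneg (x - x₀), hrpos.le])
    have hN : volume {x : Plane | ¬(x ∈ S → |‖x - x₀‖ ^ 2 - r ^ 2| = 0)} = 0 := by
      rw [← MeasureTheory.ae_iff]
      exact hae
    have hsd : volume S = 0 := by
      have h1 : volume (S \ sphere x₀ r) = 0 := measure_mono_null hsub hN
      have h2 : volume (sphere x₀ r) = 0 := Measure.addHaar_sphere volume x₀ r
      have hsub2 : S ⊆ (S \ sphere x₀ r) ∪ sphere x₀ r := fun x hx => by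
        by_cases hs : x ∈ sphere x₀ r
        · exact Set.mem_union_right _ hs
        · exact Set.mem_union_left _ ⟨hx, hs⟩
      refine le_antisymm ?_ zero_le
      calc volume S ≤ volume ((S \ sphere x₀ r) ∪ sphere x₀ r) := measure_mono hsub2
        _ ≤ volume (S \ sphere x₀ r) + volume (sphere x₀ r) := measure_union_le _ _
        _ = 0 := by rw [h1, h2, add_zero]
    exact measure_symmDiff_eq_zero_iff.mp hsd
  · rintro ⟨x₀, r, hrpos, hae⟩
    have hmass : mass A = Real.pi * r ^ 2 := by
      rw [mass, measure_congr hae]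
      exact mass_ball x₀ r hrpos.le
    have hmomA : mom A = mom (ball x₀ r) := setIntegral_congr_set hae
    have hangA : angMom A = angMom (ball x₀ r) := setIntegral_congr_set hae
    rw [hmass, hmomA, hangA, mom_ball x₀ r hrpos.le, angMom_ball x₀ r hrpos.le]
    rw [norm_smul, Real.norm_eq_abs, abs_of_pos (by positivity)]
    have hπr : Real.pi * r ^ 2 ≠ 0 := by positivity
    field_simp
    ring
end

section
/- Let A ⊆ ℝ² be a nonempty bounded open set. Then for every x₀ ∈ ℝ² and every r > 0, Q(A; B_r(x₀)) ≥ i(A) − |A|²/(2π) − |M(A)|²/|A|, and equality holds if and only if πr² = |A| and x₀ = M(A)/|A|. In particular, among all balls, Q(A; B_r(x₀)) is minimized by the ball having the same mass and the same center of mass as A. -/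
open MeasureTheory Metric

open Set
open scoped RealInnerProductSpace

lemma vol_ball_plane (x : Plane) (r : ℝ) (hr : 0 ≤ r) :
    (volume (ball x r)).toReal = Real.pi * r ^ 2 := by
  rw [EuclideanSpace.volume_ball]
  have h2 : Fintype.card (Fin 2) = 2 := by simp
  rw [h2]
  have hg : Real.Gamma ((2 : ℕ) / 2 + 1) = 1 := by norm_num
  rw [hg, ← ENNReal.ofReal_pow hr, ← ENNReal.ofReal_mul (by positivity),
    ENNReal.toReal_ofReal (by positivity),
    Real.sq_sqrt Real.pi_nonneg]
  ring

lemma integrableOn_of_bounded {g : Plane → ℝ} (hg : Continuous g) {s : Set Plane}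
    (hs : Bornology.IsBounded s) : IntegrableOn g s := by
  obtain ⟨R, hR⟩ := hs.subset_closedBall 0
  exact (hg.continuousOn.integrableOn_compact (isCompact_closedBall 0 R)).mono_set hR

lemma int_ball_sq (r : ℝ) (hr : 0 < r) :
    ∫ x in ball (0 : Plane) r, ‖x‖ ^ 2 = Real.pi * r ^ 4 / 2 := by
  have hdim : Module.finrank ℝ Plane = 2 := finrank_euclideanSpace_fin
  set f : ℝ → ℝ := fun t => if t < r then t ^ 2 else 0 with hf
  have h1 : ∫ x in ball (0 : Plane) r, ‖x‖ ^ 2 = ∫ x : Plane, f ‖x‖ := by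
    rw [← integral_indicator measurableSet_ball]
    refine integral_congr_ae (Filter.Eventually.of_forall fun x => ?_)
    by_cases hx : x ∈ ball (0 : Plane) r
    · rw [indicator_of_mem hx]; simp only [hf]
      rw [if_pos (mem_ball_zero_iff.mp hx)]
    · rw [indicator_of_notMem hx]; simp only [hf]
      rw [if_neg (by simpa [mem_ball_zero_iff] using hx)]
  rw [h1, MeasureTheory.integral_fun_norm_addHaar volume f, hdim]
  have hb : (volume (ball (0 : Plane) 1)).toReal = Real.pi := by
    simpa using vol_ball_plane 0 1 zero_le_one
  rw [measureReal_def, hb]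
  have h2 : ∫ y in Ioi (0:ℝ), y ^ (2 - 1) • f y = r ^ 4 / 4 := by
    have : ∀ y : ℝ, y ^ (2-1) • f y = (Iio r).indicator (fun t => t ^ 3) y := by
      intro y
      by_cases hy : y < r
      · simp [hf, hy, indicator_of_mem (show y ∈ Iio r from hy)]; ring
      · simp [hf, hy, indicator_of_notMem (show y ∉ Iio r from hy)]
    simp_rw [this]
    rw [setIntegral_indicator measurableSet_Iio]
    have : Ioi (0:ℝ) ∩ Iio r = Ioo 0 r := Ioi_inter_Iio
    rw [this, ← integral_Ioc_eq_integral_Ioo, ← intervalIntegral.integral_of_le hr.le,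
      integral_pow]
    norm_num
  rw [h2]
  simp only [smul_eq_mul, nsmul_eq_mul]
  ring

lemma int_ball_f (x₀ : Plane) (r : ℝ) (hr : 0 < r) :
    ∫ x in ball x₀ r, (‖x - x₀‖ ^ 2 - r ^ 2) = -(Real.pi * r ^ 4 / 2) := by
  have hmp : MeasurePreserving (fun y : Plane => y + x₀) volume volume :=
    measurePreserving_add_right volume x₀
  have hemb : MeasurableEmbedding (fun y : Plane => y + x₀) :=
    (MeasurableEquiv.addRight x₀).measurableEmbedding
  have hpre : (fun y : Plane => y + x₀) ⁻¹' ball x₀ r = ball 0 r := by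
    ext y
    simp [mem_ball, dist_eq_norm]
  have := hmp.setIntegral_preimage_emb hemb (fun x => ‖x - x₀‖ ^ 2 - r ^ 2) (ball x₀ r)
  rw [hpre] at this
  rw [← this]
  simp only [add_sub_cancel_right]
  rw [integral_sub (integrableOn_of_bounded (by continuity) isBounded_ball)
    (integrableOn_const measure_ball_lt_top.ne),
    int_ball_sq r hr, setIntegral_const, smul_eq_mul, measureReal_def, vol_ball_plane 0 r hr.le]
  ring

set_option maxHeartbeats 1000000 in
lemma key (A : Set Plane) (hA : IsOpen A) (hAb : Bornology.IsBounded A)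
    (x₀ : Plane) (r : ℝ) (hr : 0 < r) :
    Qfun A x₀ r = angMom A - 2 * ⟪x₀, mom A⟫ + mass A * ‖x₀‖ ^ 2 - mass A * r ^ 2
      + Real.pi * r ^ 4 / 2 := by
  set B := ball x₀ r with hB
  set f : Plane → ℝ := fun x => ‖x - x₀‖ ^ 2 - r ^ 2 with hf
  have hfc : Continuous f :=
    (((continuous_id.sub continuous_const).norm.pow 2).sub continuous_const)
  have hmA : MeasurableSet A := hA.measurableSet
  have hmB : MeasurableSet B := measurableSet_ball
  have hBb : Bornology.IsBounded B := isBounded_ball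
  -- integrability
  have hIAB : IntegrableOn (fun x => |f x|) (A \ B) :=
    (integrableOn_of_bounded (hfc.abs) (hAb.subset diff_subset))
  have hIBA : IntegrableOn (fun x => |f x|) (B \ A) :=
    (integrableOn_of_bounded (hfc.abs) (hBb.subset diff_subset))
  have h1 : Qfun A x₀ r = (∫ x in A \ B, |f x|) + ∫ x in B \ A, |f x| := by
    rw [Qfun, Set.symmDiff_def]
    exact setIntegral_union disjoint_sdiff_sdiff (hmB.diff hmA) hIAB hIBA
  have h2 : (∫ x in A \ B, |f x|) = ∫ x in A \ B, f x := by
    refine setIntegral_congr_fun (hmA.diff hmB) fun x hx => ?_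
    have : r ≤ ‖x - x₀‖ := by
      have := hx.2
      simpa [hB, mem_ball, dist_eq_norm, not_lt] using this
    simp only [hf]
    exact abs_of_nonneg (by nlinarith [norm_nonneg (x - x₀)])
  have h3 : (∫ x in B \ A, |f x|) = ∫ x in B \ A, -f x := by
    refine setIntegral_congr_fun (hmB.diff hmA) fun x hx => ?_
    have : ‖x - x₀‖ < r := by
      have := hx.1
      simpa [hB, mem_ball, dist_eq_norm] using this
    simp only [hf]
    exact abs_of_nonpos (by nlinarith [norm_nonneg (x - x₀)])
  have hsplitA : (∫ x in A, f x) = (∫ x in A \ B, f x) + ∫ x in A ∩ B, f x := by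
    rw [← setIntegral_union (Set.disjoint_sdiff_left.mono_right Set.inter_subset_right) (hmA.inter hmB)
      (integrableOn_of_bounded hfc (hAb.subset diff_subset))
      (integrableOn_of_bounded hfc (hAb.subset inter_subset_left)),
      diff_union_inter]
  have hsplitB : (∫ x in B, f x) = (∫ x in B \ A, f x) + ∫ x in A ∩ B, f x := by
    rw [inter_comm]
    rw [← setIntegral_union (Set.disjoint_sdiff_left.mono_right Set.inter_subset_right) (hmB.inter hmA)
      (integrableOn_of_bounded hfc (hBb.subset diff_subset))
      (integrableOn_of_bounded hfc (hBb.subset inter_subset_left)),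
      diff_union_inter]
  have hIB : (∫ x in B, f x) = -(Real.pi * r ^ 4 / 2) := int_ball_f x₀ r hr
  have hInegBA : (∫ x in B \ A, -f x) = -∫ x in B \ A, f x := integral_neg _
  -- compute ∫_A f
  have hIA : (∫ x in A, f x) = angMom A - 2 * ⟪x₀, mom A⟫ + mass A * (‖x₀‖ ^ 2 - r ^ 2) := by
    have hptw : ∀ x, f x = ‖x‖ ^ 2 - 2 * ⟪x₀, x⟫ + (‖x₀‖ ^ 2 - r ^ 2) := by
      intro x
      have h5 := norm_sub_sq_real x x₀
      have hcomm : ⟪x, x₀⟫ = ⟪x₀, x⟫ := real_inner_comm x₀ x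
      simp only [hf]; linarith
    have hi1 : IntegrableOn (fun x : Plane => ‖x‖ ^ 2) A :=
      integrableOn_of_bounded (continuous_norm.pow 2) hAb
    have hi2 : IntegrableOn (fun x : Plane => ⟪x₀, x⟫) A :=
      integrableOn_of_bounded (continuous_const.inner continuous_id) hAb
    have hi3 : IntegrableOn (fun _ : Plane => ‖x₀‖ ^ 2 - r ^ 2) A :=
      integrableOn_const hAb.measure_lt_top.ne
    have hi2' : IntegrableOn (fun x : Plane => 2 * ⟪x₀, x⟫) A := hi2.const_mul 2
    have hsub : IntegrableOn (fun x : Plane => ‖x‖ ^ 2 - 2 * ⟪x₀, x⟫) A := hi1.sub hi2'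
    have hx : IntegrableOn (fun x : Plane => x) A := by
      obtain ⟨R, hR⟩ := hAb.subset_closedBall 0
      exact ((continuous_id.continuousOn).integrableOn_compact
        (isCompact_closedBall 0 R)).mono_set hR
    have hmom : (∫ x in A, ⟪x₀, x⟫) = ⟪x₀, mom A⟫ := integral_inner hx x₀
    have hstep : (∫ x in A, f x)
        = ∫ x in A, (‖x‖ ^ 2 - 2 * ⟪x₀, x⟫ + (‖x₀‖ ^ 2 - r ^ 2)) :=
      setIntegral_congr_fun hmA fun x _ => hptw x
    rw [hstep, integral_add hsub hi3, integral_sub hi1 hi2', integral_const_mul,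
      setIntegral_const, smul_eq_mul, measureReal_def, hmom, angMom, mass]

  rw [h1, h2, h3, hInegBA]
  have : (∫ x in A \ B, f x) - (∫ x in B \ A, f x) = (∫ x in A, f x) - ∫ x in B, f x := by
    rw [hsplitA, hsplitB]; ring
  have hfin : (∫ x in A \ B, f x) + -(∫ x in B \ A, f x)
      = (∫ x in A, f x) - ∫ x in B, f x := by linarith
  rw [hfin, hIA, hIB]; ring


/-- For a nonempty bounded open set `A ⊆ ℝ²`, every `x₀` and `r > 0`:
`Q(A; B_r(x₀)) ≥ i(A) − |A|²/(2π) − |M(A)|²/|A|`, with equality iff `πr² = |A|`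
and `x₀ = M(A)/|A|`.  In particular, among all balls, `Q(A; B_r(x₀))` is minimized
by the ball having the same mass and the same center of mass as `A`. -/
theorem stmt5 (A : Set Plane) (hA : IsOpen A) (hAb : Bornology.IsBounded A)
    (hAne : A.Nonempty) :
    ∀ (x₀ : Plane) (r : ℝ), 0 < r →
      (angMom A - (mass A) ^ 2 / (2 * Real.pi) - ‖mom A‖ ^ 2 / mass A ≤ Qfun A x₀ r ∧
        (Qfun A x₀ r = angMom A - (mass A) ^ 2 / (2 * Real.pi) - ‖mom A‖ ^ 2 / mass A ↔
          Real.pi * r ^ 2 = mass A ∧ x₀ = (mass A)⁻¹ • mom A)) := by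
  intro x₀ r hr
  have hπ : (0:ℝ) < Real.pi := Real.pi_pos
  have hm : 0 < mass A :=
    ENNReal.toReal_pos (hA.measure_ne_zero volume hAne) hAb.measure_lt_top.ne
  set m := mass A with hmdef
  set M := mom A with hMdef
  set c : Plane := m⁻¹ • M with hc
  -- expansion of the two squares
  have hsq1 : m * ‖x₀ - c‖ ^ 2 = m * ‖x₀‖ ^ 2 - 2 * ⟪x₀, M⟫ + ‖M‖ ^ 2 / m := by
    rw [norm_sub_sq_real, hc, real_inner_smul_right, norm_smul, norm_inv,
      Real.norm_eq_abs, abs_of_pos hm, mul_pow]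
    field_simp
  have hsq2 : Real.pi / 2 * (r ^ 2 - m / Real.pi) ^ 2
      = Real.pi * r ^ 4 / 2 - m * r ^ 2 + m ^ 2 / (2 * Real.pi) := by
    field_simp
    ring
  have hkey := key A hA hAb x₀ r hr
  have hmain : Qfun A x₀ r - (angMom A - m ^ 2 / (2 * Real.pi) - ‖M‖ ^ 2 / m)
      = m * ‖x₀ - c‖ ^ 2 + Real.pi / 2 * (r ^ 2 - m / Real.pi) ^ 2 := by
    rw [hkey, hsq1, hsq2]; ring
  have h1 : 0 ≤ m * ‖x₀ - c‖ ^ 2 := by positivity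
  have h2 : 0 ≤ Real.pi / 2 * (r ^ 2 - m / Real.pi) ^ 2 := by positivity
  constructor
  · linarith
  constructor
  · intro heq
    have hzero : m * ‖x₀ - c‖ ^ 2 + Real.pi / 2 * (r ^ 2 - m / Real.pi) ^ 2 = 0 := by
      rw [← hmain, heq]; ring
    have hz1 : m * ‖x₀ - c‖ ^ 2 = 0 := by linarith
    have hz2 : Real.pi / 2 * (r ^ 2 - m / Real.pi) ^ 2 = 0 := by linarith
    have hx : x₀ = c := by
      have : ‖x₀ - c‖ ^ 2 = 0 := by
        rcases mul_eq_zero.mp hz1 with h | h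
        · exact absurd h hm.ne'
        · exact h
      have h6 := pow_eq_zero_iff (n := 2) (by norm_num) |>.mp this
      have h7 := norm_eq_zero.mp h6
      exact sub_eq_zero.mp h7
    have hrr : r ^ 2 - m / Real.pi = 0 := by
      rcases mul_eq_zero.mp hz2 with h | h
      · exact absurd h (by positivity)
      · exact pow_eq_zero_iff (n := 2) (by norm_num) |>.mp h
    refine ⟨?_, hx⟩
    have : r ^ 2 = m / Real.pi := by linarith
    rw [this]
    field_simp
  · rintro ⟨h4, h5⟩
    have hx0 : x₀ - c = 0 := by rw [sub_eq_zero, hc, hmdef, hMdef]; exact h5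
    have hr2 : r ^ 2 - m / Real.pi = 0 := by
      rw [eq_comm, ← h4]
      field_simp
      ring
    have : Qfun A x₀ r - (angMom A - m ^ 2 / (2 * Real.pi) - ‖M‖ ^ 2 / m) = 0 := by
      rw [hmain, hx0, hr2]; simp
    linarith
end

section
/- Let r > 0, B = B_r(0), and let Ω₀, Ω ⊆ ℝ² be nonempty bounded open sets with equal mass |Ω| = |Ω₀|, equal momentum M(Ω) = M(Ω₀), and equal angular momentum i(Ω) = i(Ω₀) (as holds when Ω = Ω_t is the image of Ω₀ under the flow of a 2D incompressible ideal fluid with vorticity the indicator of the patch). Then ‖I_Ω − I_B‖_{L¹}² ≤ 4π · (sup_{x ∈ Ω₀ △ B} | |x|² − r² |) · ‖I_{Ω₀} − I_B‖_{L¹}; that is, |Ω △ B|² ≤ 4π · (sup_{x ∈ Ω₀ △ B} | |x|² − r² |) · |Ω₀ △ B|. -/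
open MeasureTheory Metric

/-! ### Auxiliary lemmas -/

lemma vol_ball2 (s : ℝ) (hs : 0 ≤ s) :
    volume (ball (0 : Plane) s) = ENNReal.ofReal (Real.pi * s ^ 2) := by
  rw [EuclideanSpace.volume_ball]
  simp only [Fintype.card_fin]
  rw [show ((2 : ℕ) : ℝ) / 2 + 1 = 2 by norm_num, Real.Gamma_two, div_one,
    Real.sq_sqrt Real.pi_nonneg, ← ENNReal.ofReal_pow hs, ← ENNReal.ofReal_mul (by positivity)]
  ring_nf

lemma vol_closedBall2 (s : ℝ) (hs : 0 ≤ s) :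
    volume (closedBall (0 : Plane) s) = ENNReal.ofReal (Real.pi * s ^ 2) := by
  rw [MeasureTheory.Measure.addHaar_closedBall_eq_addHaar_ball, vol_ball2 s hs]

/-- Integrability of continuous functions on bounded sets of the plane. -/
lemma integrableOn_of_bounded_cont {g : Plane → ℝ} (hg : Continuous g) {A : Set Plane}
    (hA : Bornology.IsBounded A) : IntegrableOn g A := by
  obtain ⟨R, hR⟩ := hA.subset_closedBall 0
  exact (hg.continuousOn.integrableOn_compact (isCompact_closedBall 0 R)).mono_set hR

lemma vol_ne_top_of_bounded {A : Set Plane} (hA : Bornology.IsBounded A) :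
    volume A ≠ ⊤ := by
  obtain ⟨R, hR⟩ := hA.subset_closedBall 0
  exact ((measure_mono hR).trans_lt (measure_closedBall_lt_top)).ne

/-- The layer-cake ("bathtub") lower bound: if every sublevel set `{f ≤ t}` of a
nonnegative function `f` on `E` has volume at most `π t`, then
`|E|² ≤ 2π ∫_E f`. -/
lemma lemL (E : Set Plane) (hE : MeasurableSet E) (hfin : volume E ≠ ⊤)
    (f : Plane → ℝ) (hfm : Measurable f) (hf0 : ∀ x ∈ E, 0 ≤ f x)
    (hint : IntegrableOn f E)
    (hmeas : ∀ t : ℝ, 0 < t → t < (volume E).toReal / Real.pi →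
      volume {x | x ∈ E ∧ f x ≤ t} ≤ ENNReal.ofReal (Real.pi * t)) :
    (volume E).toReal ^ 2 ≤ 2 * Real.pi * ∫ x in E, f x := by
  have hπ : (0 : ℝ) < Real.pi := Real.pi_pos
  set a : ℝ := (volume E).toReal with ha_def
  have ha0 : 0 ≤ a := ENNReal.toReal_nonneg
  have hI0 : 0 ≤ ∫ x in E, f x := setIntegral_nonneg hE hf0
  rcases eq_or_lt_of_le ha0 with h0 | hapos
  · rw [← h0]
    have h2 : 0 ≤ 2 * Real.pi * ∫ x in E, f x := by nlinarith
    simpa using h2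
  set M : ℝ := a / Real.pi with hM_def
  have hM0 : 0 < M := by positivity
  have hnn : 0 ≤ᵐ[volume.restrict E] f := (ae_restrict_iff' hE).2 (ae_of_all _ hf0)
  have key : ENNReal.ofReal (∫ x in E, f x) = ∫⁻ t in Set.Ioi (0:ℝ),
      volume ({x | t < f x} ∩ E) := by
    rw [ofReal_integral_eq_lintegral_ofReal hint hnn,
      lintegral_eq_lintegral_meas_lt _ hnn hfm.aemeasurable]
    refine lintegral_congr fun t => ?_
    rw [Measure.restrict_apply (measurableSet_lt measurable_const hfm)]
  have step : ∫⁻ t in Set.Ioi (0:ℝ), volume ({x | t < f x} ∩ E)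
      ≥ ∫⁻ t in Set.Ioi (0:ℝ), (Set.Ioo (0:ℝ) M).indicator
          (fun t => ENNReal.ofReal (a - Real.pi * t)) t := by
    refine lintegral_mono fun t => ?_
    by_cases ht : t ∈ Set.Ioo (0:ℝ) M
    · rw [Set.indicator_of_mem ht]
      have hsub : E ⊆ ({x | t < f x} ∩ E) ∪ {x | x ∈ E ∧ f x ≤ t} := by
        intro x hx
        rcases le_or_gt (f x) t with h | h
        · exact Or.inr ⟨hx, h⟩
        · exact Or.inl ⟨h, hx⟩
      have hvol : volume E ≤ volume ({x | t < f x} ∩ E) + ENNReal.ofReal (Real.pi * t) :=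
        le_trans (measure_mono hsub) (le_trans (measure_union_le _ _)
          (add_le_add_right (hmeas t ht.1 ht.2) _))
      have : ENNReal.ofReal (a - Real.pi * t) ≤ volume E - ENNReal.ofReal (Real.pi * t) := by
        rw [ENNReal.ofReal_sub _ (mul_nonneg hπ.le ht.1.le)]
        exact tsub_le_tsub_right (le_of_eq (by rw [ha_def, ENNReal.ofReal_toReal hfin])) _
      exact le_trans this (tsub_le_iff_right.2 hvol)
    · rw [Set.indicator_of_notMem ht]; exact zero_le
  have hIooInt : IntegrableOn (fun t => a - Real.pi * t) (Set.Ioo (0:ℝ) M) := by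
    exact ((continuous_const.sub
      (continuous_const.mul continuous_id)).continuousOn.integrableOn_compact
      (isCompact_Icc (a := (0:ℝ)) (b := M))).mono_set Set.Ioo_subset_Icc_self
  have hivalue : ∫ t in Set.Ioo (0:ℝ) M, (a - Real.pi * t) = a ^ 2 / (2 * Real.pi) := by
    rw [← MeasureTheory.integral_Ioc_eq_integral_Ioo,
      ← intervalIntegral.integral_of_le hM0.le]
    rw [intervalIntegral.integral_sub intervalIntegrable_const
      (IntervalIntegrable.const_mul intervalIntegral.intervalIntegrable_id Real.pi)]
    rw [intervalIntegral.integral_const, intervalIntegral.integral_const_mul, integral_id,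
      smul_eq_mul]
    field_simp [hM_def]
    have hM' : Real.pi * M = a := by rw [hM_def]; field_simp
    linear_combination (a - Real.pi * M) * hM'
  have hlow : ∫⁻ t in Set.Ioi (0:ℝ), (Set.Ioo (0:ℝ) M).indicator
      (fun t => ENNReal.ofReal (a - Real.pi * t)) t
      = ENNReal.ofReal (a ^ 2 / (2 * Real.pi)) := by
    rw [lintegral_indicator measurableSet_Ioo, Measure.restrict_restrict measurableSet_Ioo,
      Set.inter_eq_self_of_subset_left (fun t ht => ht.1)]
    rw [← hivalue]
    rw [← ofReal_integral_eq_lintegral_ofReal hIooInt]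
    refine (ae_restrict_iff' measurableSet_Ioo).2 (ae_of_all _ fun t ht => ?_)
    show (0:ℝ) ≤ a - Real.pi * t
    have h3 : t * Real.pi < a := by
      have := (lt_div_iff₀ hπ).1 ht.2
      linarith
    nlinarith
  have final : ENNReal.ofReal (a ^ 2 / (2 * Real.pi)) ≤ ENNReal.ofReal (∫ x in E, f x) := by
    rw [key]; rw [← hlow] at *; exact step
  have := (ENNReal.ofReal_le_ofReal_iff hI0).1 final
  calc a ^ 2 = (2 * Real.pi) * (a ^ 2 / (2 * Real.pi)) := by field_simp
    _ ≤ 2 * Real.pi * ∫ x in E, f x := mul_le_mul_of_nonneg_left this (by positivity)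

/-- `∫_A (‖x‖² − r²) = i(A) − r²|A|`. -/
lemma int_h_eq (r : ℝ) (A : Set Plane) (hAb : Bornology.IsBounded A) :
    ∫ x in A, (‖x‖ ^ 2 - r ^ 2) = angMom A - r ^ 2 * mass A := by
  rw [integral_sub (integrableOn_of_bounded_cont (g := fun x : Plane => ‖x‖ ^ 2) (continuous_norm.pow 2) hAb)
    (integrableOn_const (vol_ne_top_of_bounded hAb))]
  rw [setIntegral_const, angMom, mass, smul_eq_mul, measureReal_def]
  ring

/-- Decomposition of the symmetric-difference integral. -/
lemma Q_eq (r : ℝ) (hr : 0 ≤ r) (A : Set Plane) (hAm : MeasurableSet A) (hAb : Bornology.IsBounded A) :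
    ∫ x in symmDiff A (ball (0:Plane) r), |‖x‖ ^ 2 - r ^ 2|
      = (∫ x in A, (‖x‖ ^ 2 - r ^ 2)) - ∫ x in ball (0:Plane) r, (‖x‖ ^ 2 - r ^ 2) := by
  set B : Set Plane := ball (0:Plane) r with hB_def
  have hBm : MeasurableSet B := measurableSet_ball
  have hBb : Bornology.IsBounded B := isBounded_ball
  have hcont : Continuous fun x : Plane => ‖x‖ ^ 2 - r ^ 2 := (continuous_norm.pow 2).sub continuous_const
  have hint1 : IntegrableOn (fun x : Plane => |‖x‖ ^ 2 - r ^ 2|) (A \ B) :=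
    (integrableOn_of_bounded_cont hcont.abs (hAb.subset Set.diff_subset))
  have hint2 : IntegrableOn (fun x : Plane => |‖x‖ ^ 2 - r ^ 2|) (B \ A) :=
    (integrableOn_of_bounded_cont hcont.abs (hBb.subset Set.diff_subset))
  have hdisj : Disjoint (A \ B) (B \ A) := disjoint_sdiff_sdiff
  have hsd : symmDiff A B = (A \ B) ∪ (B \ A) := Set.symmDiff_def _ _
  rw [hsd, setIntegral_union hdisj (hBm.diff hAm) hint1 hint2]
  have e1 : ∫ x in A \ B, |‖x‖ ^ 2 - r ^ 2| = ∫ x in A \ B, (‖x‖ ^ 2 - r ^ 2) := by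
    refine setIntegral_congr_fun (hAm.diff hBm) fun x hx => ?_
    have hxr : r ≤ ‖x‖ := by
      have := hx.2
      simpa [hB_def, mem_ball, dist_eq_norm] using this
    have : r ^ 2 ≤ ‖x‖ ^ 2 := by nlinarith [norm_nonneg x, hr]
    exact abs_of_nonneg (by linarith)
  have e2 : ∫ x in B \ A, |‖x‖ ^ 2 - r ^ 2| = ∫ x in B \ A, -(‖x‖ ^ 2 - r ^ 2) := by
    refine setIntegral_congr_fun (hBm.diff hAm) fun x hx => ?_
    have hxr : ‖x‖ < r := by
      have := hx.1
      simpa [hB_def, mem_ball, dist_eq_norm] using this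
    have : ‖x‖ ^ 2 ≤ r ^ 2 := by nlinarith [norm_nonneg x]
    exact abs_of_nonpos (by linarith)
  rw [e1, e2, integral_neg]
  have hiA : IntegrableOn (fun x : Plane => ‖x‖ ^ 2 - r ^ 2) A :=
    integrableOn_of_bounded_cont hcont hAb
  have hiB : IntegrableOn (fun x : Plane => ‖x‖ ^ 2 - r ^ 2) B :=
    integrableOn_of_bounded_cont hcont hBb
  have dA : ∫ x in A \ (A ∩ B), (‖x‖ ^ 2 - r ^ 2)
      = (∫ x in A, (‖x‖ ^ 2 - r ^ 2)) - ∫ x in A ∩ B, (‖x‖ ^ 2 - r ^ 2) :=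
    integral_diff (hAm.inter hBm) hiA Set.inter_subset_left
  have dB : ∫ x in B \ (A ∩ B), (‖x‖ ^ 2 - r ^ 2)
      = (∫ x in B, (‖x‖ ^ 2 - r ^ 2)) - ∫ x in A ∩ B, (‖x‖ ^ 2 - r ^ 2) :=
    integral_diff (hAm.inter hBm) hiB Set.inter_subset_right
  rw [show A \ B = A \ (A ∩ B) by rw [Set.diff_self_inter],
    show B \ A = B \ (A ∩ B) by rw [Set.inter_comm, Set.diff_self_inter]] at *
  rw [dA, dB]
  ring

set_option maxHeartbeats 1000000 in
/-- main theorem: For `r > 0`, `B = B_r(0)`, and nonempty bounded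
open sets `Ω₀, Ω ⊆ ℝ²` with equal mass, momentum and angular momentum (as holds
when `Ω = Ω_t` is the image of `Ω₀` under the flow of a 2D incompressible ideal
fluid with vorticity the indicator of the patch):
`|Ω △ B|² ≤ 4π · (sup_{x ∈ Ω₀ △ B} ||x|² − r²|) · |Ω₀ △ B|`. -/
theorem stmt12 (r : ℝ) (hr : 0 < r) (Ω₀ Ω : Set Plane)
    (hΩ₀ : IsOpen Ω₀) (hΩ₀b : Bornology.IsBounded Ω₀) (hΩ₀ne : Ω₀.Nonempty)
    (hΩ : IsOpen Ω) (hΩb : Bornology.IsBounded Ω) (hΩne : Ω.Nonempty)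
    (hmass : mass Ω = mass Ω₀) (hmom : mom Ω = mom Ω₀) (hang : angMom Ω = angMom Ω₀) :
    (mass (symmDiff Ω (ball (0 : Plane) r))) ^ 2
      ≤ 4 * Real.pi * (⨆ x ∈ symmDiff Ω₀ (ball (0 : Plane) r), |‖x‖ ^ 2 - r ^ 2|)
          * mass (symmDiff Ω₀ (ball (0 : Plane) r)) := by
  have hπ : (0 : ℝ) < Real.pi := Real.pi_pos
  set B : Set Plane := ball (0:Plane) r with hB_def
  have hBm : MeasurableSet B := measurableSet_ball
  have hBb : Bornology.IsBounded B := isBounded_ball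
  have hΩm : MeasurableSet Ω := hΩ.measurableSet
  have hΩ₀m : MeasurableSet Ω₀ := hΩ₀.measurableSet
  have hcont : Continuous fun x : Plane => ‖x‖ ^ 2 - r ^ 2 := (continuous_norm.pow 2).sub continuous_const
  have hmeasf : Measurable fun x : Plane => ‖x‖ ^ 2 - r ^ 2 := hcont.measurable
  -- the two pieces of the symmetric difference
  set E₁ : Set Plane := Ω \ B with hE₁_def
  set E₂ : Set Plane := B \ Ω with hE₂_def
  have hE₁m : MeasurableSet E₁ := hΩm.diff hBm
  have hE₂m : MeasurableSet E₂ := hBm.diff hΩm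
  have hE₁b : Bornology.IsBounded E₁ := hΩb.subset Set.diff_subset
  have hE₂b : Bornology.IsBounded E₂ := hBb.subset Set.diff_subset
  have hE₁fin : volume E₁ ≠ ⊤ := vol_ne_top_of_bounded hE₁b
  have hE₂fin : volume E₂ ≠ ⊤ := vol_ne_top_of_bounded hE₂b
  set a₁ : ℝ := (volume E₁).toReal with ha₁_def
  set a₂ : ℝ := (volume E₂).toReal with ha₂_def
  have ha₁0 : 0 ≤ a₁ := ENNReal.toReal_nonneg
  have ha₂0 : 0 ≤ a₂ := ENNReal.toReal_nonneg
  -- lower bound on the outer piece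
  have key₁ : a₁ ^ 2 ≤ 2 * Real.pi * ∫ x in E₁, (‖x‖ ^ 2 - r ^ 2) := by
    refine lemL E₁ hE₁m hE₁fin _ hmeasf (fun x hx => ?_)
      (integrableOn_of_bounded_cont hcont hE₁b) (fun t ht _ => ?_)
    · have hxr : r ≤ ‖x‖ := by
        have := hx.2; simpa [hB_def, mem_ball, dist_eq_norm] using this
      nlinarith [norm_nonneg x]
    · have hsub : {x | x ∈ E₁ ∧ ‖x‖ ^ 2 - r ^ 2 ≤ t}
          ⊆ closedBall (0:Plane) (Real.sqrt (r ^ 2 + t)) \ ball (0:Plane) r := by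
        rintro x ⟨hx, hxt⟩
        refine ⟨?_, hx.2⟩
        rw [mem_closedBall, dist_zero_right]
        exact (Real.le_sqrt (norm_nonneg x) (by positivity)).2 (by linarith)
      refine (measure_mono hsub).trans ?_
      have hrs : r ≤ Real.sqrt (r ^ 2 + t) :=
        (Real.le_sqrt hr.le (by positivity)).2 (by linarith)
      rw [measure_diff (ball_subset_closedBall.trans
            (closedBall_subset_closedBall hrs)) hBm.nullMeasurableSet
            (vol_ne_top_of_bounded hBb),
        vol_closedBall2 _ (Real.sqrt_nonneg _), vol_ball2 _ hr.le,
        Real.sq_sqrt (by positivity)]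
      rw [← ENNReal.ofReal_sub _ (by positivity)]
      exact le_of_eq (by ring_nf)
  -- mass of the inner piece is at most that of the ball
  have ha₂le : a₂ ≤ Real.pi * r ^ 2 := by
    have h1 : volume E₂ ≤ volume B := measure_mono Set.diff_subset
    have := ENNReal.toReal_mono (by rw [hB_def, vol_ball2 _ hr.le]; exact ENNReal.ofReal_ne_top) h1
    rwa [hB_def, vol_ball2 _ hr.le, ENNReal.toReal_ofReal (by positivity)] at this
  -- lower bound on the inner piece
  have key₂ : a₂ ^ 2 ≤ 2 * Real.pi * ∫ x in E₂, (r ^ 2 - ‖x‖ ^ 2) := by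
    have hcont2 : Continuous fun x : Plane => r ^ 2 - ‖x‖ ^ 2 :=
      continuous_const.sub (continuous_norm.pow 2)
    refine lemL E₂ hE₂m hE₂fin _ hcont2.measurable
      (fun x hx => ?_) (integrableOn_of_bounded_cont hcont2 hE₂b) (fun t ht htM => ?_)
    · have hxr : ‖x‖ < r := by
        have := hx.1; simpa [hB_def, mem_ball, dist_eq_norm] using this
      nlinarith [norm_nonneg x]
    · have htr : t < r ^ 2 := by
        have : a₂ / Real.pi ≤ r ^ 2 := by
          rw [div_le_iff₀ hπ]; nlinarith
        linarith
      have hsub : {x | x ∈ E₂ ∧ r ^ 2 - ‖x‖ ^ 2 ≤ t}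
          ⊆ ball (0:Plane) r \ ball (0:Plane) (Real.sqrt (r ^ 2 - t)) := by
        rintro x ⟨hx, hxt⟩
        refine ⟨hx.1, ?_⟩
        rw [mem_ball, dist_zero_right, not_lt]
        calc Real.sqrt (r ^ 2 - t) ≤ Real.sqrt (‖x‖ ^ 2) := Real.sqrt_le_sqrt (by linarith)
          _ = ‖x‖ := Real.sqrt_sq (norm_nonneg x)
      refine (measure_mono hsub).trans ?_
      have hsr : Real.sqrt (r ^ 2 - t) ≤ r := by
        calc Real.sqrt (r ^ 2 - t) ≤ Real.sqrt (r ^ 2) := Real.sqrt_le_sqrt (by linarith)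
          _ = r := Real.sqrt_sq hr.le
      rw [measure_diff (ball_subset_ball hsr) measurableSet_ball.nullMeasurableSet
          (vol_ne_top_of_bounded isBounded_ball),
        vol_ball2 _ hr.le, vol_ball2 _ (Real.sqrt_nonneg _), Real.sq_sqrt (by linarith)]
      rw [← ENNReal.ofReal_sub _ (mul_nonneg hπ.le (by linarith))]
      exact le_of_eq (by ring_nf)
  -- mass of the symmetric difference
  have hmassS : mass (symmDiff Ω B) = a₁ + a₂ := by
    rw [mass, Set.symmDiff_def, measure_union disjoint_sdiff_sdiff hE₂m,
      ENNReal.toReal_add hE₁fin hE₂fin]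
  -- Q(Ω) as a sum of the two pieces
  have hQsplit : ∫ x in symmDiff Ω B, |‖x‖ ^ 2 - r ^ 2|
      = (∫ x in E₁, (‖x‖ ^ 2 - r ^ 2)) + ∫ x in E₂, (r ^ 2 - ‖x‖ ^ 2) := by
    rw [Set.symmDiff_def, setIntegral_union disjoint_sdiff_sdiff hE₂m
      (integrableOn_of_bounded_cont hcont.abs hE₁b)
      (integrableOn_of_bounded_cont hcont.abs hE₂b)]
    congr 1
    · refine setIntegral_congr_fun hE₁m fun x hx => ?_
      have hxr : r ≤ ‖x‖ := by
        have := hx.2; simpa [hB_def, mem_ball, dist_eq_norm] using this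
      have : r ^ 2 ≤ ‖x‖ ^ 2 := by nlinarith [norm_nonneg x]
      exact abs_of_nonneg (by linarith)
    · refine setIntegral_congr_fun hE₂m fun x hx => ?_
      have hxr : ‖x‖ < r := by
        have := hx.1; simpa [hB_def, mem_ball, dist_eq_norm] using this
      have : ‖x‖ ^ 2 ≤ r ^ 2 := by nlinarith [norm_nonneg x]
      rw [abs_of_nonpos (by linarith)]; ring
  -- conservation: Q(Ω) = Q(Ω₀)
  have hQconv : ∫ x in symmDiff Ω B, |‖x‖ ^ 2 - r ^ 2|
      = ∫ x in symmDiff Ω₀ B, |‖x‖ ^ 2 - r ^ 2| := by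
    rw [hB_def, Q_eq r hr.le Ω hΩm hΩb, Q_eq r hr.le Ω₀ hΩ₀m hΩ₀b,
      int_h_eq r Ω hΩb, int_h_eq r Ω₀ hΩ₀b, hmass, hang]
  -- the supremum bound
  set C : ℝ := ⨆ x ∈ symmDiff Ω₀ B, |‖x‖ ^ 2 - r ^ 2| with hC_def
  have hS₀b : Bornology.IsBounded (symmDiff Ω₀ B) := by
    refine (hΩ₀b.union hBb).subset ?_
    rw [Set.symmDiff_def]
    exact Set.union_subset_union Set.diff_subset Set.diff_subset
  obtain ⟨R₀, hR₀⟩ := hS₀b.subset_closedBall 0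
  set R : ℝ := max R₀ 0 with hR_def
  have hR₀R : symmDiff Ω₀ B ⊆ closedBall 0 R :=
    hR₀.trans (closedBall_subset_closedBall (le_max_left _ _))
  have hCbdd : BddAbove (Set.range fun x : Plane =>
      ⨆ (_ : x ∈ symmDiff Ω₀ B), |‖x‖ ^ 2 - r ^ 2|) := by
    refine ⟨max (R ^ 2 + r ^ 2) 0, ?_⟩
    rintro y ⟨x, rfl⟩
    show (⨆ (_ : x ∈ symmDiff Ω₀ B), |‖x‖ ^ 2 - r ^ 2|) ≤ max (R ^ 2 + r ^ 2) 0
    by_cases hx : x ∈ symmDiff Ω₀ B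
    · rw [ciSup_pos hx]
      have hxR : ‖x‖ ≤ R := by
        have := hR₀R hx; rwa [mem_closedBall, dist_zero_right] at this
      refine le_trans ?_ (le_max_left _ _)
      have h2 : ‖x‖ ^ 2 ≤ R ^ 2 := pow_le_pow_left₀ (norm_nonneg x) hxR 2
      have h1 : |‖x‖ ^ 2 - r ^ 2| ≤ ‖x‖ ^ 2 + r ^ 2 := by
        have h3 := abs_sub (‖x‖ ^ 2) (r ^ 2)
        rwa [abs_of_nonneg (sq_nonneg ‖x‖), abs_of_nonneg (sq_nonneg r)] at h3
      linarith
    · haveI : IsEmpty (x ∈ symmDiff Ω₀ B) := ⟨hx⟩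
      rw [Real.iSup_of_isEmpty]
      exact le_max_right _ _
  have hCle : ∀ x ∈ symmDiff Ω₀ B, |‖x‖ ^ 2 - r ^ 2| ≤ C := by
    intro x hx
    have h1 : |‖x‖ ^ 2 - r ^ 2| = ⨆ (_ : x ∈ symmDiff Ω₀ B), |‖x‖ ^ 2 - r ^ 2| :=
      (ciSup_pos (f := fun _ : x ∈ symmDiff Ω₀ B => |‖x‖ ^ 2 - r ^ 2|) hx).symm
    rw [hC_def, h1]
    exact le_ciSup hCbdd x
  have hS₀m : MeasurableSet (symmDiff Ω₀ B) := by
    rw [Set.symmDiff_def]; exact (hΩ₀m.diff hBm).union (hBm.diff hΩ₀m)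
  have hS₀fin : volume (symmDiff Ω₀ B) ≠ ⊤ := vol_ne_top_of_bounded hS₀b
  have hQ₀le : ∫ x in symmDiff Ω₀ B, |‖x‖ ^ 2 - r ^ 2| ≤ C * mass (symmDiff Ω₀ B) := by
    calc ∫ x in symmDiff Ω₀ B, |‖x‖ ^ 2 - r ^ 2|
        ≤ ∫ _ in symmDiff Ω₀ B, C := by
          refine setIntegral_mono_on (integrableOn_of_bounded_cont hcont.abs hS₀b)
            (integrableOn_const hS₀fin) hS₀m hCle
      _ = C * mass (symmDiff Ω₀ B) := by
          rw [setIntegral_const, smul_eq_mul, mass, mul_comm, measureReal_def]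
  -- put everything together
  have hfinal : (a₁ + a₂) ^ 2 ≤ 4 * Real.pi * ∫ x in symmDiff Ω B, |‖x‖ ^ 2 - r ^ 2| := by
    rw [hQsplit]
    nlinarith [sq_nonneg (a₁ - a₂)]
  rw [hmassS]
  calc (a₁ + a₂) ^ 2 ≤ 4 * Real.pi * ∫ x in symmDiff Ω B, |‖x‖ ^ 2 - r ^ 2| := hfinal
    _ = 4 * Real.pi * ∫ x in symmDiff Ω₀ B, |‖x‖ ^ 2 - r ^ 2| := by rw [hQconv]
    _ ≤ 4 * Real.pi * (C * mass (symmDiff Ω₀ B)) :=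
        mul_le_mul_of_nonneg_left hQ₀le (by positivity)
    _ = 4 * Real.pi * C * mass (symmDiff Ω₀ B) := by ring
end
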